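/- Let q be a prime power, k a positive divisor of q-1 with m=(q-1)/k, and χ a generator of the character group of F_q^×. Then det[J_q(χ^{ki}, χ^{kj})]_{1≤i,j≤m-1} is a rational integer and does not depend on the choice of the generator χ. -/

import Mathlib

private noncomputable def jmat {F : Type*} [Field F] [Fintype F] {E : Type*} [CommRing E]
    (k m : ℕ) (χ : MulChar F E) : Matrix (Fin (m - 1)) (Fin (m - 1)) E :=
  Matrix.of fun i j : Fin (m - 1) =>
    ∑ x : F, (χ ^ (k * ((i : ℕ) + 1))) x * (χ ^ (k * ((j : ℕ) + 1))) (1 - x)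

private lemma jmat_map {F : Type*} [Field F] [Fintype F] {E E' : Type*} [CommRing E] [CommRing E']
    (k m : ℕ) (χ : MulChar F E) (f : E →+* E') :
    (jmat k m χ).map f = jmat k m (χ.ringHomComp f) := by
  ext i j
  simp only [jmat, Matrix.map_apply, Matrix.of_apply, map_sum, map_mul,
    MulChar.ringHomComp_pow, MulChar.ringHomComp_apply]

private def rcHom {F : Type*} [CommMonoidWithZero F] {E E' : Type*} [CommRing E] [CommRing E']
    (f : E →+* E') : MulChar F E →* MulChar F E' where
  toFun χ := χ.ringHomComp f
  map_one' := MulChar.ringHomComp_one f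
  map_mul' χ ψ := MulChar.ringHomComp_mul χ ψ f

private lemma jdet_pow {F : Type*} [Field F] [Fintype F] {E : Type*} [CommRing E]
    (k m : ℕ) (χ : MulChar F E) (hχ : χ ^ (k * m) = 1) {t : ℕ} (ht : Nat.Coprime t m) :
    (jmat k m (χ ^ t)).det = (jmat k m χ).det := by
  rcases le_or_gt m 1 with hm | hm
  · haveI : IsEmpty (Fin (m - 1)) := by
      rw [show m - 1 = 0 by omega]; infer_instance
    rw [Matrix.det_isEmpty, Matrix.det_isEmpty]
  · have hexp : ∀ a : ℕ, χ ^ (k * a) = χ ^ (k * (a % m)) := by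
      intro a
      conv_lhs => rw [← Nat.div_add_mod a m]
      rw [Nat.mul_add, pow_add, show k * (m * (a / m)) = k * m * (a / m) by ring,
        pow_mul, hχ, one_pow, one_mul]
    have hmod : ∀ i : Fin (m - 1), 1 ≤ t * ((i : ℕ) + 1) % m ∧ t * ((i : ℕ) + 1) % m < m := by
      intro i
      have hi := i.isLt
      constructor
      · rcases Nat.eq_zero_or_pos (t * ((i : ℕ) + 1) % m) with h0 | h1
        · exfalso
          have hdvd : m ∣ t * ((i : ℕ) + 1) := Nat.dvd_of_mod_eq_zero h0
          have hdvd' : m ∣ (i : ℕ) + 1 := (Nat.Coprime.symm ht).dvd_of_dvd_mul_left hdvd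
          have := Nat.le_of_dvd (by omega) hdvd'
          omega
        · exact h1
      · exact Nat.mod_lt _ (by omega)
    set e : Fin (m - 1) → Fin (m - 1) := fun i =>
      ⟨t * ((i : ℕ) + 1) % m - 1, by have := hmod i; omega⟩ with he
    have hinj : Function.Injective e := by
      intro i j hij
      have h1 := hmod i; have h2 := hmod j
      have hmm : t * ((i : ℕ) + 1) % m = t * ((j : ℕ) + 1) % m := by
        have := congrArg (fun x : Fin (m - 1) => (x : ℕ)) hij
        simp only [he] at this
        omega
      have hmodeq : (i : ℕ) + 1 ≡ (j : ℕ) + 1 [MOD m] :=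
        Nat.ModEq.cancel_left_of_coprime ht.symm hmm
      have hi := i.isLt; have hj := j.isLt
      have heq : ((i : ℕ) + 1) % m = ((j : ℕ) + 1) % m := hmodeq
      rw [Nat.mod_eq_of_lt (by omega), Nat.mod_eq_of_lt (by omega)] at heq
      exact Fin.ext (by omega)
    have hbij := Finite.injective_iff_bijective.mp hinj
    have key : ∀ i : Fin (m - 1),
        (χ ^ t) ^ (k * ((i : ℕ) + 1)) = χ ^ (k * (((e i) : ℕ) + 1)) := by
      intro i
      have h1 : ((e i : Fin (m - 1)) : ℕ) + 1 = t * ((i : ℕ) + 1) % m := by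
        have := hmod i
        simp only [he]
        omega
      rw [← pow_mul, h1, ← hexp (t * ((i : ℕ) + 1))]
      congr 1
      ring
    have hsub : jmat k m (χ ^ t) = (jmat k m χ).submatrix e e := by
      ext i j
      simp only [jmat, Matrix.of_apply, Matrix.submatrix_apply]
      rw [key i, key j]
    rw [hsub, show e = ⇑(Equiv.ofBijective e hbij) from rfl, Matrix.det_submatrix_equiv_self]

private lemma int_val {F : Type*} [Field F] [Fintype F] {n : ℕ} (hn : 0 < n)
    (ψ : MulChar F ℂ) (hψ : ψ ^ n = 1) (x : F) : IsIntegral ℤ (ψ x) := by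
  rcases eq_or_ne x 0 with rfl | hx
  · rw [MulChar.map_nonunit ψ not_isUnit_zero]
    exact isIntegral_zero
  · have hval : (ψ x) ^ n = 1 := by
      rw [← MulChar.pow_apply' ψ hn.ne' x, hψ, MulChar.one_apply (isUnit_iff_ne_zero.mpr hx)]
    refine ⟨Polynomial.X ^ n - Polynomial.C 1, Polynomial.monic_X_pow_sub_C 1 hn.ne', ?_⟩
    simp [hval]

private lemma fixed_rat {n : ℕ+} (x : CyclotomicField n ℚ)
    (hx : ∀ σ : CyclotomicField n ℚ ≃ₐ[ℚ] CyclotomicField n ℚ, σ x = x) :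
    ∃ r : ℚ, algebraMap ℚ (CyclotomicField n ℚ) r = x := by
  haveI : NeZero ((n : ℕ) : ℚ) := ⟨by exact_mod_cast n.ne_zero⟩
  haveI : IsCyclotomicExtension {(n : ℕ)} ℚ (CyclotomicField n ℚ) := by
    convert CyclotomicField.isCyclotomicExtension (n : ℕ) ℚ
    · rfl
    · exact Subsingleton.elim _ _
  haveI := IsCyclotomicExtension.isGalois {(n : ℕ)} ℚ (CyclotomicField n ℚ)
  haveI : FiniteDimensional ℚ (CyclotomicField n ℚ) :=
    IsCyclotomicExtension.finiteDimensional {(n : ℕ)} ℚ (CyclotomicField n ℚ)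
  have h1 : IntermediateField.fixedField
      (⊤ : Subgroup (CyclotomicField n ℚ ≃ₐ[ℚ] CyclotomicField n ℚ)) = ⊥ := by
    rw [← IntermediateField.fixingSubgroup_bot]
    exact IsGalois.fixedField_fixingSubgroup ⊥
  have h2 : x ∈ IntermediateField.fixedField
      (⊤ : Subgroup (CyclotomicField n ℚ ≃ₐ[ℚ] CyclotomicField n ℚ)) := fun σ => hx σ
  rw [h1] at h2
  exact IntermediateField.mem_bot.mp h2

theorem stmt11 {F : Type*} [Field F] [Fintype F] (q k m : ℕ)
    (hq : Fintype.card F = q) (hqpp : ∃ p n : ℕ, p.Prime ∧ 0 < n ∧ q = p ^ n)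
    (hk0 : 0 < k) (hk : k ∣ q - 1) (hm : m = (q - 1) / k) :
    ∃ z : ℤ, ∀ χ : MulChar F ℂ, (∀ ψ : MulChar F ℂ, ∃ t : ℕ, ψ = χ ^ t) →
      Matrix.det (Matrix.of fun i j : Fin (m - 1) =>
        ∑ x : F, (χ ^ (k * ((i : ℕ) + 1))) x * (χ ^ (k * ((j : ℕ) + 1))) (1 - x)) =
        (z : ℂ) := by
  classical
  by_cases hex : ∃ χ₀ : MulChar F ℂ, ∀ ψ : MulChar F ℂ, ∃ t : ℕ, ψ = χ₀ ^ t
  case neg => exact ⟨0, fun χ hχ => absurd ⟨χ, hχ⟩ hex⟩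
  obtain ⟨χ₀, hgen⟩ := hex
  set n : ℕ := q - 1 with hn_def
  have hq2 : 2 ≤ q := hq ▸ Fintype.one_lt_card
  have hn : 0 < n := by omega
  haveI : NeZero n := ⟨hn.ne'⟩
  have hkm : k * m = n := by rw [hm]; exact Nat.mul_div_cancel' hk
  have hmn : m ∣ n := ⟨k, by rw [← hkm, Nat.mul_comm]⟩
  have hcard : Fintype.card F - 1 = n := by rw [hq]
  have hprim : IsPrimitiveRoot (Complex.exp (2 * Real.pi * Complex.I / n)) n :=
    Complex.isPrimitiveRoot_exp n hn.ne'
  have hord : ∀ χ : MulChar F ℂ, (∀ ψ : MulChar F ℂ, ∃ t : ℕ, ψ = χ ^ t) → orderOf χ = n := by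
    intro χ hχ
    obtain ⟨ψ, hψ⟩ := MulChar.exists_mulChar_orderOf F (by rw [hcard]) hprim
    obtain ⟨t, ht⟩ := hχ ψ
    rw [ht] at hψ
    exact Nat.dvd_antisymm (hcard ▸ MulChar.orderOf_dvd_card_sub_one F χ)
      (hψ ▸ orderOf_pow_dvd t)
  have hord₀ := hord χ₀ hgen
  have hχ₀n : χ₀ ^ n = 1 := hord₀ ▸ pow_orderOf_eq_one χ₀
  have hcop : ∀ {t : ℕ}, orderOf (χ₀ ^ t) = n → Nat.Coprime t m := by
    intro t hto
    rw [orderOf_pow, hord₀] at hto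
    have hgd := Nat.div_eq_self.mp hto
    have hg1 : Nat.gcd n t = 1 := by omega
    exact Nat.Coprime.coprime_dvd_right hmn (Nat.coprime_comm.mp hg1)
  -- cyclotomic field setup
  haveI hnz : NeZero (((⟨n, hn⟩ : ℕ+) : ℕ) : ℚ) := ⟨by exact_mod_cast hn.ne'⟩
  haveI hcyc : IsCyclotomicExtension {n} ℚ (CyclotomicField n ℚ) := by
    convert CyclotomicField.isCyclotomicExtension n ℚ
    · rfl
    · exact Subsingleton.elim _ _
  haveI : FiniteDimensional ℚ (CyclotomicField n ℚ) :=
    IsCyclotomicExtension.finiteDimensional {n} ℚ (CyclotomicField n ℚ)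
  haveI : Algebra.IsAlgebraic ℚ (CyclotomicField n ℚ) := Algebra.IsAlgebraic.of_finite ℚ _
  let φ : CyclotomicField n ℚ →ₐ[ℚ] ℂ := IsAlgClosed.lift
  have φinj : Function.Injective (φ : CyclotomicField n ℚ → ℂ) := fun a b h => φ.toRingHom.injective h
  have hζL : IsPrimitiveRoot (IsCyclotomicExtension.zeta n ℚ (CyclotomicField n ℚ))
      n := IsCyclotomicExtension.zeta_spec n ℚ _
  have hμ : IsPrimitiveRoot (φ (IsCyclotomicExtension.zeta n ℚ _)) n :=
    hζL.map_of_injective φinj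
  have hrange : ∀ a : F, ∃ y : CyclotomicField n ℚ, φ y = χ₀ a := by
    intro a
    rcases eq_or_ne a 0 with rfl | ha
    · exact ⟨0, by rw [map_zero, MulChar.map_nonunit χ₀ not_isUnit_zero]⟩
    · obtain ⟨j, _, hj⟩ := MulChar.exists_apply_eq_pow hχ₀n hμ ha
      exact ⟨IsCyclotomicExtension.zeta n ℚ _ ^ j, by rw [map_pow, ← hj]⟩
  choose ff hff using hrange
  let χ₀' : MulChar F (CyclotomicField n ℚ) :=
    { toFun := ff
      map_one' := φinj (by rw [hff]; simp)
      map_mul' := fun x y => φinj (by simp only [map_mul, hff])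
      map_nonunit' := fun a ha => φinj (by rw [hff, map_zero, MulChar.map_nonunit χ₀ ha]) }
  have hff' : ∀ a : F, φ (χ₀' a) = χ₀ a := hff
  have hcomp : χ₀'.ringHomComp φ.toRingHom = χ₀ := MulChar.ext fun a => hff a
  have hordχ₀' : orderOf χ₀' = n := by
    have h := orderOf_injective (rcHom (F := F) φ.toRingHom)
      (MulChar.injective_ringHomComp φinj) χ₀'
    have h2 : rcHom (F := F) φ.toRingHom χ₀' = χ₀ := hcomp
    rw [h2] at h
    rw [← h, hord₀]
  have hχ₀'km : χ₀' ^ (k * m) = 1 := by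
    rw [hkm]
    exact orderOf_dvd_iff_pow_eq_one.mp (by rw [hordχ₀'])
  have hsurj' : ∀ ψ : MulChar F (CyclotomicField n ℚ), ∃ t : ℕ, ψ = χ₀' ^ t := by
    intro ψ
    obtain ⟨t, ht⟩ := hgen (ψ.ringHomComp φ.toRingHom)
    refine ⟨t, MulChar.injective_ringHomComp φinj ?_⟩
    show ψ.ringHomComp φ.toRingHom = (χ₀' ^ t).ringHomComp φ.toRingHom
    rw [← MulChar.ringHomComp_pow, hcomp]
    exact ht
  have hfix : ∀ σ : CyclotomicField n ℚ ≃ₐ[ℚ] CyclotomicField n ℚ,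
      σ ((jmat k m χ₀').det) = (jmat k m χ₀').det := by
    intro σ
    have h1 : σ ((jmat k m χ₀').det)
        = (jmat k m (χ₀'.ringHomComp σ.toAlgHom.toRingHom)).det :=
      (RingHom.map_det σ.toAlgHom.toRingHom (jmat k m χ₀')).trans
        (congrArg Matrix.det (jmat_map k m χ₀' σ.toAlgHom.toRingHom))
    obtain ⟨t, ht⟩ := hsurj' (χ₀'.ringHomComp σ.toAlgHom.toRingHom)
    have hot : orderOf (χ₀' ^ t) = n := by
      rw [← ht]
      have h := orderOf_injective (rcHom (F := F) σ.toAlgHom.toRingHom)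
        (MulChar.injective_ringHomComp (fun a b hab => σ.injective hab)) χ₀'
      exact h.trans hordχ₀'
    have hcop' : Nat.Coprime t m := by
      rw [orderOf_pow, hordχ₀'] at hot
      have hgd := Nat.div_eq_self.mp hot
      have hg1 : Nat.gcd n t = 1 := by omega
      exact Nat.Coprime.coprime_dvd_right hmn (Nat.coprime_comm.mp hg1)
    rw [h1, ht, jdet_pow k m χ₀' hχ₀'km hcop']
  obtain ⟨r, hr⟩ : ∃ r : ℚ, algebraMap ℚ (CyclotomicField n ℚ) r = (jmat k m χ₀').det :=
    fixed_rat (n := (⟨n, hn⟩ : ℕ+)) _ hfix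
  have hdet₀ : (jmat k m χ₀).det = (r : ℂ) := by
    have c1 := RingHom.map_det φ.toRingHom (jmat k m χ₀')
    have c2 := congrArg Matrix.det (jmat_map k m χ₀' φ.toRingHom)
    rw [hcomp] at c2
    rw [c2.symm.trans c1.symm, ← hr]
    rw [show φ.toRingHom (algebraMap ℚ _ r) = φ (algebraMap ℚ _ r) from rfl, AlgHom.commutes]
    exact eq_ratCast (algebraMap ℚ ℂ) r
  have hint : IsIntegral ℤ ((jmat k m χ₀).det) := by
    refine IsIntegral.det fun i j => IsIntegral.sum _ fun x _ => IsIntegral.mul ?_ ?_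
    · exact int_val hn _ (by rw [← pow_mul, mul_comm, pow_mul, hχ₀n, one_pow]) x
    · exact int_val hn _ (by rw [← pow_mul, mul_comm, pow_mul, hχ₀n, one_pow]) (1 - x)
  have hintr : IsIntegral ℤ r := by
    rw [hdet₀] at hint
    have h : IsIntegral ℤ (algebraMap ℚ ℂ r) := by rwa [eq_ratCast]
    exact (isIntegral_algebraMap_iff (algebraMap ℚ ℂ).injective).mp h
  obtain ⟨z, hz⟩ := IsIntegrallyClosed.isIntegral_iff.mp hintr
  refine ⟨z, ?_⟩
  intro χ hχgen
  obtain ⟨t, rfl⟩ := hgen χ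
  have hcopt : Nat.Coprime t m := hcop (hord _ hχgen)
  show (jmat k m (χ₀ ^ t)).det = ((z : ℤ) : ℂ)
  rw [jdet_pow k m χ₀ (by rw [hkm]; exact hχ₀n) hcopt, hdet₀]
  have hrz : r = (z : ℚ) := by rw [← hz, eq_intCast]
  rw [hrz, Rat.cast_intCast]
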